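/- arXiv:0807.3454 — 3 statements merged into one kernel-verified Lean document; each statement's English description precedes it below -/
import Mathlib

section
/- Canonical decomposition of the stress tensor (Eqs. (9)–(11)). Let ρ₀ > 0, let F be an invertible real 3×3 matrix, and set C = Fᵀ F (so det C = (det F)² > 0) and ρ = ρ₀ (det C)^{-1/2}. Let g : ℝ × (3×3 matrices) → ℝ be differentiable at (ρ, C), with g(r, ·) positively homogeneous of degree zero in its matrix argument for every r. Define e on matrices near C by e(C) = g(ρ₀ (det C)^{-1/2}, C). Suppose E and G are 3×3 matrices representing derivatives via the trace pairing: (fderiv e C)(H) = tr(E H) for all H, and the partial Fréchet derivative of g with respect to its matrix argument at (ρ, C) in direction H equals tr(G H) for all H; let g_ρ denote the partial derivative of g with respect to its first (scalar) argument at (ρ, C). Then the stress tensor σ := 2ρ F E Fᵀ satisfies σ = -p I + σ₁ with p = ρ² g_ρ, σ₁ = 2ρ F G Fᵀ, and tr σ₁ = 0, where I is the 3×3 identity matrix. -/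
open Matrix

attribute [local instance] Matrix.normedAddCommGroup Matrix.normedSpace

private lemma trace_pairing_inj {A B : Matrix (Fin 3) (Fin 3) ℝ}
    (h : ∀ H, (A * H).trace = (B * H).trace) : A = B := by
  ext i j
  have := h (Matrix.single j i 1)
  simpa [Matrix.trace, Matrix.mul_apply, Matrix.single, Matrix.diag,
    ite_and, Finset.sum_ite_eq, Finset.sum_ite_eq'] using this

private lemma det_dir (C H : Matrix (Fin 3) (Fin 3) ℝ) (hC : IsUnit C.det) :
    HasDerivAt (fun s : ℝ => (C + s • H).det) (C.det * (C⁻¹ * H).trace) 0 := by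
  have key : ∀ s : ℝ, (C + s • H).det
      = C.det * (1 + (C⁻¹ * H).trace * s
        + ((1 + (Polynomial.X : Polynomial ℝ) • (C⁻¹ * H).map Polynomial.C).det).divX.divX.eval s * s ^ 2) := by
    intro s
    have h2 : C + s • H = C * (1 + s • (C⁻¹ * H)) := by
      rw [Matrix.mul_add, Matrix.mul_one, Matrix.mul_smul, ← Matrix.mul_assoc,
        Matrix.mul_nonsing_inv _ hC, Matrix.one_mul]
    rw [h2, Matrix.det_mul, Matrix.det_one_add_smul]
  have h3 : HasDerivAt (fun s : ℝ => C.det * (1 + (C⁻¹ * H).trace * s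
        + ((1 + (Polynomial.X : Polynomial ℝ) • (C⁻¹ * H).map Polynomial.C).det).divX.divX.eval s * s ^ 2))
      (C.det * (C⁻¹ * H).trace) 0 := by
    have hpoly := Polynomial.hasDerivAt ((1 + (Polynomial.X : Polynomial ℝ) • (C⁻¹ * H).map Polynomial.C).det).divX.divX 0
    have h4 := (((hasDerivAt_const (0:ℝ) (1:ℝ)).add
        ((hasDerivAt_id (0:ℝ)).const_mul ((C⁻¹ * H).trace))).add
        (hpoly.mul ((hasDerivAt_pow 2 (0:ℝ))))).const_mul C.det
    refine h4.congr_deriv ?_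
    push_cast
    ring
  exact h3.congr_of_eventuallyEq (Filter.Eventually.of_forall key)


/-- Eqs. (9)–(11): canonical decomposition of the stress tensor `σ = 2ρ F (∂e/∂C) Fᵀ` into a
spherical part `-p I` with `p = ρ² g'_ρ` and a traceless deviatoric part `σ₁ = 2ρ F g'_C Fᵀ`. -/
theorem stress_tensor_decomposition
    (ρ₀ : ℝ) (hρ₀ : 0 < ρ₀)
    (F : Matrix (Fin 3) (Fin 3) ℝ) (hF : IsUnit F)
    (C : Matrix (Fin 3) (Fin 3) ℝ) (hCdef : C = Fᵀ * F)
    (ρ : ℝ) (hρdef : ρ = ρ₀ * C.det ^ (-(1 : ℝ) / 2))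
    (g : ℝ × Matrix (Fin 3) (Fin 3) ℝ → ℝ)
    (hg : DifferentiableAt ℝ g (ρ, C))
    (hhom : ∀ r : ℝ, ∀ t : ℝ, 0 < t → ∀ M : Matrix (Fin 3) (Fin 3) ℝ,
      g (r, t • M) = g (r, M))
    (E G : Matrix (Fin 3) (Fin 3) ℝ)
    (hE : ∀ H : Matrix (Fin 3) (Fin 3) ℝ,
      fderiv ℝ (fun M : Matrix (Fin 3) (Fin 3) ℝ =>
        g (ρ₀ * M.det ^ (-(1 : ℝ) / 2), M)) C H = (E * H).trace)
    (hG : ∀ H : Matrix (Fin 3) (Fin 3) ℝ,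
      fderiv ℝ (fun M : Matrix (Fin 3) (Fin 3) ℝ => g (ρ, M)) C H = (G * H).trace)
    (gρ : ℝ) (hgρ : gρ = deriv (fun r : ℝ => g (r, C)) ρ)
    (σ p : _) (σ₁ : Matrix (Fin 3) (Fin 3) ℝ)
    (hσ : σ = (2 * ρ) • (F * E * Fᵀ))
    (hp : p = ρ ^ 2 * gρ)
    (hσ₁ : σ₁ = (2 * ρ) • (F * G * Fᵀ)) :
    σ = (-p) • (1 : Matrix (Fin 3) (Fin 3) ℝ) + σ₁ ∧ σ₁.trace = 0 := by
  have hFdetU : IsUnit F.det := (Matrix.isUnit_iff_isUnit_det F).mp hF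
  have hdetF : F.det ≠ 0 := hFdetU.ne_zero
  have hdetC : 0 < C.det := by
    rw [hCdef, Matrix.det_mul, Matrix.det_transpose]
    exact mul_self_pos.mpr hdetF
  have hCu : IsUnit C.det := hdetC.ne'.isUnit
  -- partial derivative in the matrix slot
  have hprod : HasFDerivAt (fun M : Matrix (Fin 3) (Fin 3) ℝ => (ρ, M))
      ((0 : Matrix (Fin 3) (Fin 3) ℝ →L[ℝ] ℝ).prod
        (ContinuousLinearMap.id ℝ (Matrix (Fin 3) (Fin 3) ℝ))) C :=
    (hasFDerivAt_const ρ C).prodMk (hasFDerivAt_id C)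
  have hgM : HasFDerivAt (fun M : Matrix (Fin 3) (Fin 3) ℝ => g (ρ, M))
      ((fderiv ℝ g (ρ, C)).comp ((0 : Matrix (Fin 3) (Fin 3) ℝ →L[ℝ] ℝ).prod
        (ContinuousLinearMap.id ℝ (Matrix (Fin 3) (Fin 3) ℝ)))) C :=
    hg.hasFDerivAt.comp C hprod
  have hGval : ∀ H : Matrix (Fin 3) (Fin 3) ℝ,
      fderiv ℝ g (ρ, C) ((0 : ℝ), H) = (G * H).trace := by
    intro H
    have h := hG H
    rw [hgM.fderiv] at h
    simpa using h
  -- partial derivative in the scalar slot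
  have hgρval : gρ = fderiv ℝ g (ρ, C) ((1 : ℝ), (0 : Matrix (Fin 3) (Fin 3) ℝ)) := by
    have hcurve : HasDerivAt (fun r : ℝ => (r, C)) ((1:ℝ), (0 : Matrix (Fin 3) (Fin 3) ℝ)) ρ :=
      (hasDerivAt_id ρ).prodMk (hasDerivAt_const ρ C)
    have h : HasDerivAt (fun r : ℝ => g (r, C))
        (fderiv ℝ g (ρ, C) ((1:ℝ), (0 : Matrix (Fin 3) (Fin 3) ℝ))) ρ :=
      hg.hasFDerivAt.comp_hasDerivAt ρ hcurve
    rw [hgρ, h.deriv]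
  -- linear decomposition
  have hsplit : ∀ (a : ℝ) (H : Matrix (Fin 3) (Fin 3) ℝ),
      fderiv ℝ g (ρ, C) (a, H) = a * gρ + (G * H).trace := by
    intro a H
    have h1 : ((a, H) : ℝ × Matrix (Fin 3) (Fin 3) ℝ)
        = a • (((1:ℝ), (0 : Matrix (Fin 3) (Fin 3) ℝ))) + (((0:ℝ), H)) := by
      simp [Prod.ext_iff]
    rw [h1, map_add, ContinuousLinearMap.map_smul, smul_eq_mul, hGval, hgρval]
  -- differentiability of δ
  have hdetD : DifferentiableAt ℝ (fun M : Matrix (Fin 3) (Fin 3) ℝ => M.det) C := by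
    simp only [Matrix.det_fin_three]; fun_prop
  have hδdiff : DifferentiableAt ℝ
      (fun M : Matrix (Fin 3) (Fin 3) ℝ => ρ₀ * M.det ^ (-(1:ℝ)/2)) C :=
    (hdetD.rpow_const (Or.inl hdetC.ne')).const_mul ρ₀
  -- directional derivative of δ
  have hδdir : ∀ H : Matrix (Fin 3) (Fin 3) ℝ,
      fderiv ℝ (fun M : Matrix (Fin 3) (Fin 3) ℝ => ρ₀ * M.det ^ (-(1:ℝ)/2)) C H
        = (-ρ/2) * (C⁻¹ * H).trace := by
    intro H
    have h0 : C + (0:ℝ) • H = C := by simp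
    have hline : HasDerivAt (fun s : ℝ => C + s • H) H 0 := by
      have := ((hasDerivAt_id (0:ℝ)).smul_const H).const_add C; rwa [one_smul] at this
    have hrpow : HasDerivAt (fun x : ℝ => x ^ (-(1:ℝ)/2))
        ((-(1:ℝ)/2) * C.det ^ ((-(1:ℝ)/2) - 1)) ((fun s : ℝ => (C + s • H).det) 0) := by
      show HasDerivAt _ _ ((C + (0:ℝ) • H).det)
      rw [h0]
      exact Real.hasDerivAt_rpow_const (Or.inl hdetC.ne')
    have hcomp := (hrpow.comp 0 (det_dir C H hCu)).const_mul ρ₀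
    have hf' : HasFDerivAt (fun M : Matrix (Fin 3) (Fin 3) ℝ => ρ₀ * M.det ^ (-(1:ℝ)/2))
        (fderiv ℝ (fun M : Matrix (Fin 3) (Fin 3) ℝ => ρ₀ * M.det ^ (-(1:ℝ)/2)) C)
        ((fun s : ℝ => C + s • H) 0) := by
      show HasFDerivAt _ _ (C + (0:ℝ) • H)
      rw [h0]; exact hδdiff.hasFDerivAt
    have hfd := hf'.comp_hasDerivAt 0 hline
    have huniq := hfd.unique hcomp
    refine huniq.trans ?_; rw [Real.rpow_sub_one hdetC.ne', hρdef]
    field_simp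
  -- chain rule for e
  have hφ : HasFDerivAt (fun M : Matrix (Fin 3) (Fin 3) ℝ => (ρ₀ * M.det ^ (-(1:ℝ)/2), M))
      ((fderiv ℝ (fun M : Matrix (Fin 3) (Fin 3) ℝ => ρ₀ * M.det ^ (-(1:ℝ)/2)) C).prod
        (ContinuousLinearMap.id ℝ (Matrix (Fin 3) (Fin 3) ℝ))) C :=
    hδdiff.hasFDerivAt.prodMk (hasFDerivAt_id C)
  have hgφ : HasFDerivAt g (fderiv ℝ g (ρ, C))
      ((fun M : Matrix (Fin 3) (Fin 3) ℝ => (ρ₀ * M.det ^ (-(1:ℝ)/2), M)) C) := by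
    show HasFDerivAt g _ (ρ₀ * C.det ^ (-(1:ℝ)/2), C)
    rw [← hρdef]; exact hg.hasFDerivAt
  have he : HasFDerivAt (fun M : Matrix (Fin 3) (Fin 3) ℝ => g (ρ₀ * M.det ^ (-(1:ℝ)/2), M))
      ((fderiv ℝ g (ρ, C)).comp
        ((fderiv ℝ (fun M : Matrix (Fin 3) (Fin 3) ℝ => ρ₀ * M.det ^ (-(1:ℝ)/2)) C).prod
          (ContinuousLinearMap.id ℝ (Matrix (Fin 3) (Fin 3) ℝ)))) C :=
    HasFDerivAt.comp C hgφ hφ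
  have hEval : ∀ H : Matrix (Fin 3) (Fin 3) ℝ,
      (E * H).trace = (-(ρ * gρ)/2) * (C⁻¹ * H).trace + (G * H).trace := by
    intro H
    rw [← hE H, he.fderiv]
    simp only [ContinuousLinearMap.coe_comp', Function.comp_apply,
      ContinuousLinearMap.prod_apply, ContinuousLinearMap.coe_id', id_eq]
    rw [hsplit, hδdir H]
    ring
  have hEeq : E = (-(ρ * gρ)/2) • C⁻¹ + G := by
    apply trace_pairing_inj
    intro H
    rw [hEval H, Matrix.add_mul, Matrix.trace_add, Matrix.smul_mul, Matrix.trace_smul,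
      smul_eq_mul]
  -- F C⁻¹ Fᵀ = 1
  have hFdetT : IsUnit Fᵀ.det := by rw [Matrix.det_transpose]; exact hFdetU
  have hFCF : F * C⁻¹ * Fᵀ = 1 := by
    rw [hCdef, Matrix.mul_inv_rev, ← Matrix.mul_assoc,
      Matrix.mul_nonsing_inv F hFdetU, Matrix.one_mul, Matrix.nonsing_inv_mul Fᵀ hFdetT]
  -- trace of σ₁
  have htrGC : (G * C).trace = 0 := by
    have hev : (fun t : ℝ => g (ρ, t • C)) =ᶠ[nhds (1:ℝ)] (fun _ => g (ρ, C)) := by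
      filter_upwards [Ioi_mem_nhds (by norm_num : (0:ℝ) < 1)] with t ht
      exact hhom ρ t ht C
    have hcurve : HasDerivAt (fun t : ℝ => t • C) C 1 := by
      have := (hasDerivAt_id (1:ℝ)).smul_const C; rwa [one_smul] at this
    have hgM' : HasFDerivAt (fun M : Matrix (Fin 3) (Fin 3) ℝ => g (ρ, M))
        ((fderiv ℝ g (ρ, C)).comp ((0 : Matrix (Fin 3) (Fin 3) ℝ →L[ℝ] ℝ).prod
          (ContinuousLinearMap.id ℝ (Matrix (Fin 3) (Fin 3) ℝ))))
        ((fun t : ℝ => t • C) 1) := by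
      show HasFDerivAt _ _ ((1:ℝ) • C)
      rw [one_smul]; exact hgM
    have h1 := hgM'.comp_hasDerivAt 1 hcurve
    have h2 : HasDerivAt (fun t : ℝ => g (ρ, t • C)) 0 1 :=
      (hasDerivAt_const (1:ℝ) (g (ρ, C))).congr_of_eventuallyEq hev
    have h3 := h1.unique h2
    replace h3 : fderiv ℝ g (ρ, C) ((0:ℝ), C) = 0 := h3
    rw [← hGval C, h3]
  constructor
  · rw [hσ, hσ₁, hEeq, Matrix.mul_add, Matrix.add_mul, Matrix.mul_smul, Matrix.smul_mul,
      hFCF, smul_add, smul_smul, hp]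
    have : 2 * ρ * (-(ρ * gρ)/2) = -(ρ^2 * gρ) := by ring
    rw [this]
  · rw [hσ₁, Matrix.trace_smul, Matrix.trace_mul_cycle, ← hCdef, Matrix.trace_mul_comm,
      htrGC, smul_zero]
end

section
/- Kinematic identity Ḟ = (∂V/∂x) F. Let E = EuclideanSpace ℝ (Fin 3), let φ : ℝ × E → E be twice continuously differentiable, and let V : ℝ × E → E be such that V(t, φ(t, X)) = ∂φ/∂t (t, X) for all (t, X), with V(t, ·) differentiable at φ(t, X). Then, for every (t, X), the time derivative of the map t ↦ D_X φ(t, ·)(X) (the spatial Fréchet derivative of φ(t, ·) at X) exists and equals the composition D_x V(t, ·)(φ(t, X)) ∘ D_X φ(t, ·)(X). -/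
open ContinuousLinearMap

/-- Kinematic identity `Ḟ = (∂V/∂x) F`: the time derivative of the deformation gradient
`F = D_X φ(t,·)(X)` equals the spatial velocity gradient composed with `F`. -/
theorem deriv_deformation_gradient
    (φ : ℝ × EuclideanSpace ℝ (Fin 3) → EuclideanSpace ℝ (Fin 3))
    (hφ : ContDiff ℝ 2 φ)
    (V : ℝ × EuclideanSpace ℝ (Fin 3) → EuclideanSpace ℝ (Fin 3))
    (hV : ∀ (t : ℝ) (X : EuclideanSpace ℝ (Fin 3)),
      V (t, φ (t, X)) = deriv (fun τ : ℝ => φ (τ, X)) t)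
    (hVdiff : ∀ (t : ℝ) (X : EuclideanSpace ℝ (Fin 3)),
      DifferentiableAt ℝ (fun y => V (t, y)) (φ (t, X))) :
    ∀ (t : ℝ) (X : EuclideanSpace ℝ (Fin 3)),
      HasDerivAt (fun τ : ℝ => fderiv ℝ (fun Y => φ (τ, Y)) X)
        ((fderiv ℝ (fun y => V (t, y)) (φ (t, X))).comp
          (fderiv ℝ (fun Y => φ (t, Y)) X)) t := by
  intro t X
  let E := EuclideanSpace ℝ (Fin 3)
  set g : ℝ × E → (ℝ × E →L[ℝ] E) := fderiv ℝ φ with hg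
  have hφ1 : Differentiable ℝ φ := hφ.differentiable two_ne_zero
  have hg1 : ContDiff ℝ 1 g := hφ.fderiv_right (le_refl _)
  have hgdiff : Differentiable ℝ g := hg1.differentiable one_ne_zero
  -- fact 1 : spatial fderiv of φ(τ,·)
  have fact1 : ∀ (τ : ℝ) (Y : E),
      fderiv ℝ (fun Y => φ (τ, Y)) Y = (g (τ, Y)).comp (inr ℝ ℝ E) := by
    intro τ Y
    exact (((hφ1 (τ, Y)).hasFDerivAt).comp Y (hasFDerivAt_prodMk_right τ Y)).fderiv
  -- fact 2 : time derivative of φ(·,Y)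
  have fact2 : ∀ (τ : ℝ) (Y : E),
      HasDerivAt (fun s : ℝ => φ (s, Y)) ((g (τ, Y)) (1, 0)) τ := by
    intro τ Y
    have := ((hφ1 (τ, Y)).hasFDerivAt).comp τ (hasFDerivAt_prodMk_left (𝕜 := ℝ) τ Y)
    exact this.hasDerivAt
  -- the "compose with inr" operator
  set B : (ℝ × E →L[ℝ] E) →L[ℝ] (E →L[ℝ] E) :=
    (ContinuousLinearMap.compL ℝ E (ℝ × E) E).flip (inr ℝ ℝ E) with hB
  -- derivative of τ ↦ g (τ, X)
  have hgt : HasDerivAt (fun τ : ℝ => g (τ, X)) ((fderiv ℝ g (t, X)) (1, 0)) t := by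
    have := ((hgdiff (t, X)).hasFDerivAt).comp t (hasFDerivAt_prodMk_left (𝕜 := ℝ) t X)
    exact this.hasDerivAt
  have key : HasDerivAt (fun τ : ℝ => fderiv ℝ (fun Y => φ (τ, Y)) X)
      (B ((fderiv ℝ g (t, X)) (1, 0))) t := by
    have := (B.hasFDerivAt.comp_hasDerivAt t hgt)
    simp only [fact1]
    exact this
  -- identify B (D²g (1,0)) with the RHS
  have symm := second_derivative_symmetric (f := φ) (f' := g)
    (fun y => (hφ1 y).hasFDerivAt) ((hgdiff (t, X)).hasFDerivAt)
  -- X ↦ V (t, φ (t, X)) equals X ↦ g (t, X) (1,0)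
  have heq : (fun Y : E => V (t, φ (t, Y))) = fun Y : E => (g (t, Y)) (1, 0) := by
    funext Y
    rw [hV t Y, (fact2 t Y).deriv]
  -- two computations of fderiv of this map
  have hF : HasFDerivAt (fun Y => φ (t, Y)) ((g (t, X)).comp (inr ℝ ℝ E)) X :=
    ((hφ1 (t, X)).hasFDerivAt).comp X (hasFDerivAt_prodMk_right t X)
  have h1 : HasFDerivAt (fun Y : E => V (t, φ (t, Y)))
      ((fderiv ℝ (fun y => V (t, y)) (φ (t, X))).comp ((g (t, X)).comp (inr ℝ ℝ E))) X :=
    by have := ((hVdiff t X).hasFDerivAt).comp X hF; exact this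
  have h2 : HasFDerivAt (fun Y : E => (g (t, Y)) (1, 0))
      (((apply ℝ E ((1 : ℝ), (0 : E))).comp (fderiv ℝ g (t, X))).comp (inr ℝ ℝ E)) X := by
    have hginner : HasFDerivAt (fun Y : E => g (t, Y))
        ((fderiv ℝ g (t, X)).comp (inr ℝ ℝ E)) X :=
      ((hgdiff (t, X)).hasFDerivAt).comp X (hasFDerivAt_prodMk_right t X)
    exact ((apply ℝ E ((1 : ℝ), (0 : E))).hasFDerivAt).comp X hginner
  have h12 : (fderiv ℝ (fun y => V (t, y)) (φ (t, X))).comp ((g (t, X)).comp (inr ℝ ℝ E))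
      = ((apply ℝ E ((1 : ℝ), (0 : E))).comp (fderiv ℝ g (t, X))).comp (inr ℝ ℝ E) := by
    have := h1.unique (heq ▸ h2)
    exact this
  have hfinal : B ((fderiv ℝ g (t, X)) (1, 0))
      = (fderiv ℝ (fun y => V (t, y)) (φ (t, X))).comp (fderiv ℝ (fun Y => φ (t, Y)) X) := by
    rw [fact1 t X]
    refine ContinuousLinearMap.ext fun v => ?_
    have := congrFun (congrArg DFunLike.coe h12) v
    simp only [coe_comp', Function.comp_apply, apply_apply, inr_apply] at this ⊢
    rw [hB]
    simp only [flip_apply, compL_apply, coe_comp', Function.comp_apply, inr_apply]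
    rw [symm (1, 0) ((0 : ℝ), v)]
    exact this.symm
  exact hfinal ▸ key
end

section
/- Clebsch potentials yield the momentum equation (fluid case of the potential equations (16)). Let E = EuclideanSpace ℝ (Fin 3). Let λ, s : ℝ × E → ℝ be twice continuously differentiable, let ψ, h, Ω, θ : ℝ × E → ℝ with ψ continuously differentiable, and let V : ℝ × E → E be continuously differentiable. For a scalar field f, write ḟ = ∂f/∂t + ⟪∇_x f, V⟫ for its material derivative, where ∇_x f is the spatial gradient. Assume for all (t, x): (i) V = ∇_x λ + ψ ∇_x s (Clebsch representation); (ii) λ̇ = (1/2)‖V‖² - h - Ω; (iii) ψ̇ = θ; (iv) ṡ = 0. Then the momentum equation holds: Γ + ∇_x(h + Ω) - θ ∇_x s = 0, where Γ(t, x) = ∂V/∂t (t, x) + (D_x V)(t, x)(V(t, x)) is the material acceleration. -/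
open InnerProductSpace ContinuousLinearMap

noncomputable section ClebschAux

local notation "E3" => EuclideanSpace ℝ (Fin 3)

private lemma clebsch_spatial_hasFDerivAt {F : Type*} [NormedAddCommGroup F] [NormedSpace ℝ F]
    {f : ℝ × E3 → F} {t : ℝ} {x : E3}
    (hf : DifferentiableAt ℝ f (t, x)) :
    HasFDerivAt (fun y => f (t, y)) ((fderiv ℝ f (t, x)).comp (inr ℝ ℝ E3)) x :=
  hf.hasFDerivAt.comp x (hasFDerivAt_prodMk_right t x)

private lemma clebsch_time_hasDerivAt {F : Type*} [NormedAddCommGroup F] [NormedSpace ℝ F]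
    {f : ℝ × E3 → F} {t : ℝ} {x : E3}
    (hf : DifferentiableAt ℝ f (t, x)) :
    HasDerivAt (fun τ => f (τ, x)) (fderiv ℝ f (t, x) (1, 0)) t := by
  simpa [Function.comp_def] using (hf.hasFDerivAt.comp t (hasFDerivAt_prodMk_left t x)).hasDerivAt

private lemma clebsch_inner_gradient (g : E3 → ℝ) (x u : E3) :
    (inner ℝ (gradient g x) u : ℝ) = fderiv ℝ g x u := by
  simp [gradient, InnerProductSpace.toDual_symm_apply]

private lemma clebsch_mdot_eq {f : ℝ × E3 → ℝ} (hf : Differentiable ℝ f) (t : ℝ) (x w : E3) :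
    deriv (fun τ => f (τ, x)) t + (inner ℝ (gradient (fun y => f (t, y)) x) w : ℝ)
      = fderiv ℝ f (t, x) (1, w) := by
  rw [(clebsch_time_hasDerivAt (hf _)).deriv, clebsch_inner_gradient,
    (clebsch_spatial_hasFDerivAt (hf _)).fderiv,
    show ((1 : ℝ), w) = ((1 : ℝ), (0 : E3)) + ((0 : ℝ), w) by simp, map_add]
  simp

/-- Differentiating the Clebsch pairing identity `⟪V q, u⟫ = Dλ q (0,u) + ψ q * Ds q (0,u)`. -/
private lemma clebsch_factA (lam s ψ : ℝ × E3 → ℝ) (V : ℝ × E3 → E3)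
    (dψ : Differentiable ℝ ψ) (dV : Differentiable ℝ V)
    (dDlam : Differentiable ℝ (fderiv ℝ lam)) (dDs : Differentiable ℝ (fderiv ℝ s))
    (star : ∀ (q : ℝ × E3) (u : E3),
      (inner ℝ (V q) u : ℝ) = fderiv ℝ lam q ((0 : ℝ), u) + ψ q * fderiv ℝ s q ((0 : ℝ), u))
    (p : ℝ × E3) (u : E3) (w : ℝ × E3) :
    (inner ℝ (fderiv ℝ V p w) u : ℝ) =
      fderiv ℝ (fderiv ℝ lam) p w ((0 : ℝ), u)
        + fderiv ℝ ψ p w * fderiv ℝ s p ((0 : ℝ), u)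
        + ψ p * fderiv ℝ (fderiv ℝ s) p w ((0 : ℝ), u) := by
  have hA1 : HasFDerivAt (fun q => (inner ℝ (V q) u : ℝ))
      ((fderivInnerCLM ℝ (V p, u)).comp ((fderiv ℝ V p).prod 0)) p :=
    (dV p).hasFDerivAt.inner ℝ (hasFDerivAt_const u p)
  have h1 : HasFDerivAt (fun q => fderiv ℝ lam q ((0 : ℝ), u))
      ((fderiv ℝ lam p).comp 0 + (fderiv ℝ (fderiv ℝ lam) p).flip ((0 : ℝ), u)) p :=
    (dDlam p).hasFDerivAt.clm_apply (hasFDerivAt_const ((0 : ℝ), u) p)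
  have h2 : HasFDerivAt (fun q => fderiv ℝ s q ((0 : ℝ), u))
      ((fderiv ℝ s p).comp 0 + (fderiv ℝ (fderiv ℝ s) p).flip ((0 : ℝ), u)) p :=
    (dDs p).hasFDerivAt.clm_apply (hasFDerivAt_const ((0 : ℝ), u) p)
  have hA2 : HasFDerivAt (fun q => fderiv ℝ lam q ((0 : ℝ), u) + ψ q * fderiv ℝ s q ((0 : ℝ), u))
      (((fderiv ℝ lam p).comp 0 + (fderiv ℝ (fderiv ℝ lam) p).flip ((0 : ℝ), u))
        + (ψ p • ((fderiv ℝ s p).comp 0 + (fderiv ℝ (fderiv ℝ s) p).flip ((0 : ℝ), u))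
            + fderiv ℝ s p ((0 : ℝ), u) • fderiv ℝ ψ p)) p :=
    h1.add ((dψ p).hasFDerivAt.mul h2)
  have hfe : (fun q => (inner ℝ (V q) u : ℝ))
      = fun q => fderiv ℝ lam q ((0 : ℝ), u) + ψ q * fderiv ℝ s q ((0 : ℝ), u) :=
    funext fun q => star q u
  rw [hfe] at hA1
  have e := congrFun (congrArg (DFunLike.coe) (hA1.unique hA2)) w
  simp only [coe_comp', Function.comp_apply, prod_apply, zero_apply, add_apply, flip_apply,
    coe_smul', Pi.smul_apply, smul_eq_mul, fderivInnerCLM_apply, map_zero] at e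
  simp only [inner_zero_right, zero_add, add_zero, map_zero] at e
  linear_combination e

/-- Differentiating the entropy-conservation identity `Ds q (1, V q) = 0`. -/
private lemma clebsch_factB (s : ℝ × E3 → ℝ) (V : ℝ × E3 → E3)
    (dV : Differentiable ℝ V) (dDs : Differentiable ℝ (fderiv ℝ s))
    (hK0 : ∀ q : ℝ × E3, fderiv ℝ s q (1, V q) = 0)
    (p : ℝ × E3) (w : ℝ × E3) :
    fderiv ℝ (fderiv ℝ s) p w (1, V p) + fderiv ℝ s p ((0 : ℝ), fderiv ℝ V p w) = 0 := by
  have hB : HasFDerivAt (fun q => fderiv ℝ s q (1, V q))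
      ((fderiv ℝ s p).comp ((0 : (ℝ × E3) →L[ℝ] ℝ).prod (fderiv ℝ V p))
        + (fderiv ℝ (fderiv ℝ s) p).flip (1, V p)) p :=
    (dDs p).hasFDerivAt.clm_apply (HasFDerivAt.prodMk (hasFDerivAt_const (1 : ℝ) p) (dV p).hasFDerivAt)
  have hfe : (fun q => fderiv ℝ s q (1, V q)) = fun _ : ℝ × E3 => (0 : ℝ) := funext hK0
  rw [hfe] at hB
  have e := congrFun (congrArg (DFunLike.coe) (hB.unique (hasFDerivAt_const (0 : ℝ) p))) w
  simp only [coe_comp', Function.comp_apply, prod_apply, zero_apply, add_apply, flip_apply] at e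
  linear_combination e

/-- Spatial gradient of the Bernoulli-type function `(1/2)‖V‖² - Dλ (1, V)`. -/
private lemma clebsch_factC (lam : ℝ × E3 → ℝ) (V : ℝ × E3 → E3)
    (dV : Differentiable ℝ V) (dDlam : Differentiable ℝ (fderiv ℝ lam))
    (t : ℝ) (x : E3) (v : E3) :
    (inner ℝ (gradient (fun y => (1 / 2 : ℝ) * ‖V (t, y)‖ ^ 2
        - fderiv ℝ lam (t, y) (1, V (t, y))) x) v : ℝ)
      = inner ℝ (V (t, x)) (fderiv ℝ V (t, x) ((0 : ℝ), v))
        - fderiv ℝ lam (t, x) ((0 : ℝ), fderiv ℝ V (t, x) ((0 : ℝ), v))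
        - fderiv ℝ (fderiv ℝ lam) (t, x) ((0 : ℝ), v) (1, V (t, x)) := by
  set p : ℝ × E3 := (t, x) with hp
  have hinner : HasFDerivAt (fun q : ℝ × E3 => (1 / 2 : ℝ) * (inner ℝ (V q) (V q) : ℝ))
      ((1 / 2 : ℝ) • ((fderivInnerCLM ℝ (V p, V p)).comp ((fderiv ℝ V p).prod (fderiv ℝ V p)))) p :=
    ((dV p).hasFDerivAt.inner ℝ (dV p).hasFDerivAt).const_mul _
  have hcl : HasFDerivAt (fun q => fderiv ℝ lam q (1, V q))
      ((fderiv ℝ lam p).comp ((0 : (ℝ × E3) →L[ℝ] ℝ).prod (fderiv ℝ V p))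
        + (fderiv ℝ (fderiv ℝ lam) p).flip (1, V p)) p :=
    (dDlam p).hasFDerivAt.clm_apply (HasFDerivAt.prodMk (hasFDerivAt_const (1 : ℝ) p) (dV p).hasFDerivAt)
  have hGd := hinner.sub hcl
  have hnorm : (fun q : ℝ × E3 => (1 / 2 : ℝ) * (inner ℝ (V q) (V q) : ℝ)
        - fderiv ℝ lam q (1, V q))
      = fun q : ℝ × E3 => (1 / 2 : ℝ) * ‖V q‖ ^ 2 - fderiv ℝ lam q (1, V q) := by
    funext q; rw [real_inner_self_eq_norm_sq]
  rw [show ((fun q : ℝ × E3 => (1 / 2 : ℝ) * (inner ℝ (V q) (V q) : ℝ)) - fun q => fderiv ℝ lam q (1, V q))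
      = fun q : ℝ × E3 => (1 / 2 : ℝ) * (inner ℝ (V q) (V q) : ℝ) - fderiv ℝ lam q (1, V q) from rfl,
    hnorm] at hGd
  have hsp : HasFDerivAt (fun y => (1 / 2 : ℝ) * ‖V (t, y)‖ ^ 2
        - fderiv ℝ lam (t, y) (1, V (t, y)))
      ((fderiv ℝ (fun q : ℝ × E3 => (1 / 2 : ℝ) * ‖V q‖ ^ 2
          - fderiv ℝ lam q (1, V q)) p).comp (inr ℝ ℝ E3)) x :=
    clebsch_spatial_hasFDerivAt hGd.differentiableAt
  rw [clebsch_inner_gradient, hsp.fderiv]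
  simp only [coe_comp', Function.comp_apply, inr_apply, hGd.fderiv]
  simp only [coe_sub', Pi.sub_apply, coe_smul', Pi.smul_apply, coe_comp', Function.comp_apply,
    prod_apply, add_apply, flip_apply, zero_apply, fderivInnerCLM_apply, smul_eq_mul]
  rw [real_inner_comm (fderiv ℝ V p ((0 : ℝ), v)) (V p)]
  ring

end ClebschAux

/-- Fluid case of the potential equations (16): a velocity field admitting the Clebsch
representation `V = ∇λ + ψ ∇s`, with `λ̇ = (1/2)‖V‖² - h - Ω`, `ψ̇ = θ` and `ṡ = 0`,
satisfies the Euler momentum equation `Γ + ∇(h + Ω) - θ ∇s = 0`. -/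
theorem clebsch_potentials_yield_momentum_equation
    (lam s : ℝ × EuclideanSpace ℝ (Fin 3) → ℝ)
    (hlam : ContDiff ℝ 2 lam) (hs : ContDiff ℝ 2 s)
    (ψ h Ω θ : ℝ × EuclideanSpace ℝ (Fin 3) → ℝ) (hψ : ContDiff ℝ 1 ψ)
    (V : ℝ × EuclideanSpace ℝ (Fin 3) → EuclideanSpace ℝ (Fin 3)) (hV : ContDiff ℝ 1 V)
    -- (i) Clebsch representation
    (hi : ∀ (t : ℝ) (x : EuclideanSpace ℝ (Fin 3)),
      V (t, x) = gradient (fun y => lam (t, y)) x + ψ (t, x) • gradient (fun y => s (t, y)) x)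
    -- (ii) evolution of λ
    (hii : ∀ (t : ℝ) (x : EuclideanSpace ℝ (Fin 3)),
      deriv (fun τ : ℝ => lam (τ, x)) t +
          inner ℝ (gradient (fun y => lam (t, y)) x) (V (t, x)) =
        (1 / 2 : ℝ) * ‖V (t, x)‖ ^ 2 - h (t, x) - Ω (t, x))
    -- (iii) evolution of ψ
    (hiii : ∀ (t : ℝ) (x : EuclideanSpace ℝ (Fin 3)),
      deriv (fun τ : ℝ => ψ (τ, x)) t +
          inner ℝ (gradient (fun y => ψ (t, y)) x) (V (t, x)) = θ (t, x))
    -- (iv) entropy conservation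
    (hiv : ∀ (t : ℝ) (x : EuclideanSpace ℝ (Fin 3)),
      deriv (fun τ : ℝ => s (τ, x)) t +
          inner ℝ (gradient (fun y => s (t, y)) x) (V (t, x)) = (0 : ℝ)) :
    ∀ (t : ℝ) (x : EuclideanSpace ℝ (Fin 3)),
      (deriv (fun τ : ℝ => V (τ, x)) t + fderiv ℝ (fun y => V (t, y)) x (V (t, x))) +
          gradient (fun y => h (t, y) + Ω (t, y)) x -
          θ (t, x) • gradient (fun y => s (t, y)) x = 0 := by
  have dlam : Differentiable ℝ lam := hlam.differentiable (by norm_num)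
  have ds : Differentiable ℝ s := hs.differentiable (by norm_num)
  have dψ : Differentiable ℝ ψ := hψ.differentiable (by norm_num)
  have dV : Differentiable ℝ V := hV.differentiable (by norm_num)
  have dDlam : Differentiable ℝ (fderiv ℝ lam) :=
    (hlam.fderiv_right (m := 1) (by norm_num)).differentiable (by norm_num)
  have dDs : Differentiable ℝ (fderiv ℝ s) :=
    (hs.fderiv_right (m := 1) (by norm_num)).differentiable (by norm_num)
  -- Clebsch pairing
  have star : ∀ (q : ℝ × EuclideanSpace ℝ (Fin 3)) (u : EuclideanSpace ℝ (Fin 3)),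
      (inner ℝ (V q) u : ℝ) = fderiv ℝ lam q ((0 : ℝ), u) + ψ q * fderiv ℝ s q ((0 : ℝ), u) := by
    rintro ⟨t', x'⟩ u
    rw [hi t' x', inner_add_left, real_inner_smul_left, clebsch_inner_gradient,
      clebsch_inner_gradient, (clebsch_spatial_hasFDerivAt (dlam _)).fderiv,
      (clebsch_spatial_hasFDerivAt (ds _)).fderiv]
    simp
  -- entropy conservation as identity for the full differential
  have hK0 : ∀ q : ℝ × EuclideanSpace ℝ (Fin 3), fderiv ℝ s q (1, V q) = 0 := by
    rintro ⟨t', x'⟩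
    rw [← clebsch_mdot_eq ds]
    exact hiv t' x'
  intro t x
  have symlam := (hlam.contDiffAt (x := (t, x))).isSymmSndFDerivAt (by simp [minSmoothness_of_isRCLikeNormedField])
  have syms := (hs.contDiffAt (x := (t, x))).isSymmSndFDerivAt (by simp [minSmoothness_of_isRCLikeNormedField])
  -- rewrite `h + Ω` via the Bernoulli-type function
  have hGfun : (fun y => h (t, y) + Ω (t, y))
      = fun y => (1 / 2 : ℝ) * ‖V (t, y)‖ ^ 2 - fderiv ℝ lam (t, y) (1, V (t, y)) := by
    funext y
    have h1 := hii t y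
    have h2 := clebsch_mdot_eq dlam t y (V (t, y))
    linarith
  rw [hGfun]
  apply ext_inner_right ℝ
  intro v
  rw [inner_sub_left, inner_add_left, inner_add_left, real_inner_smul_left, inner_zero_left]
  -- the individual terms
  have hΓt : deriv (fun τ : ℝ => V (τ, x)) t = fderiv ℝ V (t, x) (1, 0) :=
    (clebsch_time_hasDerivAt (dV (t, x))).deriv
  have hΓx : fderiv ℝ (fun y => V (t, y)) x (V (t, x))
      = fderiv ℝ V (t, x) ((0 : ℝ), V (t, x)) := by
    rw [(clebsch_spatial_hasFDerivAt (dV (t, x))).fderiv]; simp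
  have hgs : (inner ℝ (gradient (fun y => s (t, y)) x) v : ℝ)
      = fderiv ℝ s (t, x) ((0 : ℝ), v) := by
    rw [clebsch_inner_gradient, (clebsch_spatial_hasFDerivAt (ds (t, x))).fderiv]; simp
  have hθ : θ (t, x) = fderiv ℝ ψ (t, x) (1, V (t, x)) := by
    rw [← hiii t x]; exact clebsch_mdot_eq dψ t x (V (t, x))
  have fA1 := clebsch_factA lam s ψ V dψ dV dDlam dDs star (t, x) v (1, 0)
  have fA2 := clebsch_factA lam s ψ V dψ dV dDlam dDs star (t, x) v ((0 : ℝ), V (t, x))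
  have fB := clebsch_factB s V dV dDs hK0 (t, x) ((0 : ℝ), v)
  have hT3 := clebsch_factC lam V dV dDlam t x v
  have hstar := star (t, x) (fderiv ℝ V (t, x) ((0 : ℝ), v))
  have hsplit : ((1 : ℝ), V (t, x))
      = ((1 : ℝ), (0 : EuclideanSpace ℝ (Fin 3))) + ((0 : ℝ), V (t, x)) := by simp
  have eψ : fderiv ℝ ψ (t, x) (1, V (t, x))
      = fderiv ℝ ψ (t, x) (1, 0) + fderiv ℝ ψ (t, x) ((0 : ℝ), V (t, x)) := by
    rw [hsplit, map_add]
  have elam : fderiv ℝ (fderiv ℝ lam) (t, x) ((0 : ℝ), v) (1, V (t, x))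
      = fderiv ℝ (fderiv ℝ lam) (t, x) (1, 0) ((0 : ℝ), v)
        + fderiv ℝ (fderiv ℝ lam) (t, x) ((0 : ℝ), V (t, x)) ((0 : ℝ), v) := by
    rw [symlam ((0 : ℝ), v) (1, V (t, x)), hsplit, map_add, ContinuousLinearMap.add_apply]
  have es : fderiv ℝ (fderiv ℝ s) (t, x) ((0 : ℝ), v) (1, V (t, x))
      = fderiv ℝ (fderiv ℝ s) (t, x) (1, 0) ((0 : ℝ), v)
        + fderiv ℝ (fderiv ℝ s) (t, x) ((0 : ℝ), V (t, x)) ((0 : ℝ), v) := by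
    rw [syms ((0 : ℝ), v) (1, V (t, x)), hsplit, map_add, ContinuousLinearMap.add_apply]
  rw [hΓt, hΓx, hT3, hgs, hθ]
  linear_combination fA1 + fA2 + hstar - elam - fderiv ℝ s (t, x) ((0 : ℝ), v) * eψ
    + ψ (t, x) * fB - ψ (t, x) * es
end
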